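/- Let H : E → ℝ be smooth, β a closed smooth 1-form on E, f : E → ℝ smooth, and ζ a smooth vector field on E such that L_ζ(α_H + β) = df (ζ is a weak Noether symmetry). Then the function J(x) = (α_H + β)(x)(ζ(x)) − f(x) is a first integral of Hamilton's equations: dJ(x)(Z_H(x)) = 0 for all x ∈ E; equivalently, for every solution t ↦ (q(t), p(t)) of q̇ᵢ = ∂H/∂pᵢ, ṗᵢ = −∂H/∂qᵢ on an interval, the function t ↦ J(t, q(t), p(t)) is constant. -/

import Mathlib

noncomputable section
open scoped ContDiff

/-- The extended phase space `E = ℝ × ℝⁿ × ℝⁿ`, with points `x = (t, q, p)`. -/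
abbrev EE (n : ℕ) : Type := ℝ × (Fin n → ℝ) × (Fin n → ℝ)

/-- The Poincaré–Cartan 1-form `α_H = p dq − H dt`:
`α_H(x)(τ̂, ξ̂, η̂) = ∑ i, pᵢ ξ̂ᵢ − H(x) τ̂`. -/
def pcForm {n : ℕ} (H : EE n → ℝ) (x : EE n) : EE n →L[ℝ] ℝ :=
  (∑ i, x.2.2 i • ((ContinuousLinearMap.proj i).comp
      ((ContinuousLinearMap.fst ℝ (Fin n → ℝ) (Fin n → ℝ)).comp
        (ContinuousLinearMap.snd ℝ ℝ ((Fin n → ℝ) × (Fin n → ℝ))))))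
    - H x • ContinuousLinearMap.fst ℝ ℝ ((Fin n → ℝ) × (Fin n → ℝ))

/-- The vector field `Z_H(x) = (1, ∂H/∂p(x), −∂H/∂q(x))` of Hamilton's equations. -/
def ZH {n : ℕ} (H : EE n → ℝ) (x : EE n) : EE n :=
  (1, fun i => fderiv ℝ H x (0, 0, Pi.single i 1),
      fun i => - fderiv ℝ H x (0, Pi.single i 1, 0))

/-- The Lie derivative of a 1-form `α` along a vector field `ζ`:
`(L_ζ α)(x)(v) = (Dα(x)(ζ(x)))(v) + α(x)(Dζ(x)(v))`. -/
def lieDeriv {n : ℕ} (ζ : EE n → EE n) (α : EE n → (EE n →L[ℝ] ℝ)) (x : EE n) :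
    EE n →L[ℝ] ℝ :=
  fderiv ℝ α x (ζ x) + (α x).comp (fderiv ℝ ζ x)

/-- The exterior derivative of a 1-form:
`dα(x)(u,v) = (Dα(x)u)(v) − (Dα(x)v)(u)`. -/
def extDeriv₁ {n : ℕ} (α : EE n → (EE n →L[ℝ] ℝ)) (x u v : EE n) : ℝ :=
  fderiv ℝ α x u v - fderiv ℝ α x v u

namespace WN

variable {n : ℕ}

/-- The ξ_i projection CLM. -/
def Lm (n : ℕ) (i : Fin n) : EE n →L[ℝ] ℝ :=
  (ContinuousLinearMap.proj i).comp
    ((ContinuousLinearMap.fst ℝ (Fin n → ℝ) (Fin n → ℝ)).comp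
      (ContinuousLinearMap.snd ℝ ℝ ((Fin n → ℝ) × (Fin n → ℝ))))

def Tm (n : ℕ) : EE n →L[ℝ] ℝ := ContinuousLinearMap.fst ℝ ℝ ((Fin n → ℝ) × (Fin n → ℝ))

def Sm (n : ℕ) : EE n →L[ℝ] (EE n →L[ℝ] ℝ) :=
  ∑ i, (((ContinuousLinearMap.proj i).comp
    ((ContinuousLinearMap.snd ℝ (Fin n → ℝ) (Fin n → ℝ)).comp
      (ContinuousLinearMap.snd ℝ ℝ ((Fin n → ℝ) × (Fin n → ℝ))))).smulRight (Lm n i))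

lemma Sm_apply (u v : EE n) : Sm n u v = ∑ i, u.2.2 i * v.2.1 i := by
  simp [Sm, Lm, ContinuousLinearMap.sum_apply]

lemma pcForm_eq (H : EE n → ℝ) (x : EE n) : pcForm H x = Sm n x - H x • Tm n := by
  refine ContinuousLinearMap.ext fun v => ?_
  simp [pcForm, Sm, Lm, Tm, ContinuousLinearMap.sum_apply]

lemma clm_decomp (φ : EE n →L[ℝ] ℝ) (u : EE n) :
    φ u = u.1 * φ (1,0,0) + (∑ i, u.2.1 i * φ (0, Pi.single i 1, 0))
        + ∑ i, u.2.2 i * φ (0, 0, Pi.single i 1) := by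
  have hsing : ∀ w : Fin n → ℝ, w = ∑ i, w i • (Pi.single i (1:ℝ) : Fin n → ℝ) := by
    intro w
    have := pi_eq_sum_univ w
    convert this using 2 with i
    funext j
    simp [Pi.single_apply, eq_comm]
  have hu : u = u.1 • ((1:ℝ),(0:Fin n→ℝ),(0:Fin n→ℝ))
      + (∑ i, u.2.1 i • (((0:ℝ), Pi.single i (1:ℝ), (0:Fin n→ℝ)) : EE n))
      + ∑ i, u.2.2 i • (((0:ℝ), (0:Fin n→ℝ), Pi.single i (1:ℝ)) : EE n) := by
    refine Prod.ext ?_ (Prod.ext ?_ ?_)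
    · simp [Prod.fst_sum]
    · simp [Prod.fst_sum, Prod.snd_sum]
      exact hsing u.2.1
    · simp [Prod.fst_sum, Prod.snd_sum]
      exact hsing u.2.2
  conv_lhs => rw [hu]
  simp only [map_add, map_sum, map_smul, smul_eq_mul]

lemma hasFDerivAt_pcForm (H : EE n → ℝ) {x : EE n} (hH : DifferentiableAt ℝ H x) :
    HasFDerivAt (pcForm H) (Sm n - (fderiv ℝ H x).smulRight (Tm n)) x := by
  have h1 : HasFDerivAt (fun y : EE n => Sm n y) (Sm n) x := (Sm n).hasFDerivAt
  have h2 : HasFDerivAt (fun y : EE n => H y • Tm n)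
      ((fderiv ℝ H x).smulRight (Tm n)) x := by
    have := hH.hasFDerivAt.smul_const (Tm n); exact this
  have h3 := h1.sub h2
  have : (fun y : EE n => Sm n y - H y • Tm n) = pcForm H := by
    funext y; rw [pcForm_eq]
  rw [← this]; exact h3

lemma fderiv_pcForm (H : EE n → ℝ) {x : EE n} (hH : DifferentiableAt ℝ H x) :
    fderiv ℝ (pcForm H) x = Sm n - (fderiv ℝ H x).smulRight (Tm n) :=
  (hasFDerivAt_pcForm H hH).fderiv

lemma extDeriv_pcForm_ZH (H : EE n → ℝ) {x : EE n} (hH : DifferentiableAt ℝ H x) (u : EE n) :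
    extDeriv₁ (pcForm H) x u (ZH H x) = 0 := by
  have hfd := fderiv_pcForm H hH
  rw [extDeriv₁, hfd]
  set D := fderiv ℝ H x with hD
  set z := ZH H x with hz
  have hz1 : z.1 = 1 := rfl
  have hz2 : ∀ i, z.2.1 i = D (0, 0, Pi.single i 1) := fun i => rfl
  have hz3 : ∀ i, z.2.2 i = - D (0, Pi.single i 1, 0) := fun i => rfl
  have hDz : D z = D (1,0,0) := by
    rw [clm_decomp D z]
    have h1 : ∑ i, z.2.1 i * D (0, Pi.single i 1, 0)
        = ∑ i, D (0, 0, Pi.single i 1) * D (0, Pi.single i 1, 0) :=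
      Finset.sum_congr rfl fun i _ => by rw [hz2]
    have h2 : ∑ i, z.2.2 i * D (0, 0, Pi.single i 1)
        = - ∑ i, D (0, 0, Pi.single i 1) * D (0, Pi.single i 1, 0) := by
      rw [← Finset.sum_neg_distrib]
      exact Finset.sum_congr rfl fun i _ => by rw [hz3]; ring
    rw [h1, h2, hz1]; ring
  have hDu := clm_decomp D u
  simp only [ContinuousLinearMap.sub_apply, ContinuousLinearMap.smulRight_apply,
    ContinuousLinearMap.smul_apply, smul_eq_mul, Sm_apply]
  have hTz : Tm n z = 1 := rfl
  have hTu : Tm n u = u.1 := rfl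
  rw [hTz, hTu, hDz, hDu]
  have h3 : ∑ i, u.2.2 i * z.2.1 i = ∑ i, u.2.2 i * D (0, 0, Pi.single i 1) :=
    Finset.sum_congr rfl fun i _ => by rw [hz2]
  have h4 : ∑ i, z.2.2 i * u.2.1 i = - ∑ i, u.2.1 i * D (0, Pi.single i 1, 0) := by
    rw [← Finset.sum_neg_distrib]
    exact Finset.sum_congr rfl fun i _ => by rw [hz3]; ring
  rw [h3, h4]
  ring

end WN

theorem weak_noether_first_integral {n : ℕ} (hn : 1 ≤ n)
    (H f : EE n → ℝ) (β : EE n → (EE n →L[ℝ] ℝ)) (ζ : EE n → EE n)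
    (hH : ContDiff ℝ ∞ H) (hβ : ContDiff ℝ ∞ β) (hf : ContDiff ℝ ∞ f)
    (hζ : ContDiff ℝ ∞ ζ)
    (hβclosed : ∀ x u v, extDeriv₁ β x u v = 0)
    (hsym : ∀ x, lieDeriv ζ (fun y => pcForm H y + β y) x = fderiv ℝ f x)
    (J : EE n → ℝ) (hJ : ∀ x, J x = (pcForm H x + β x) (ζ x) - f x) :
    (∀ x, fderiv ℝ J x (ZH H x) = 0) ∧
    (∀ (a b : ℝ) (q p : ℝ → (Fin n → ℝ)),
      (∀ t ∈ Set.Ioo a b,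
        (∀ i, HasDerivAt (fun s => q s i)
          (fderiv ℝ H (t, q t, p t) (0, 0, Pi.single i 1)) t) ∧
        (∀ i, HasDerivAt (fun s => p s i)
          (- fderiv ℝ H (t, q t, p t) (0, Pi.single i 1, 0)) t)) →
      ∀ t₁ ∈ Set.Ioo a b, ∀ t₂ ∈ Set.Ioo a b,
        J (t₁, q t₁, p t₁) = J (t₂, q t₂, p t₂)) := by
  have hHd : Differentiable ℝ H := hH.differentiable (by simp)
  have hβd : Differentiable ℝ β := hβ.differentiable (by simp)
  have hfd : Differentiable ℝ f := hf.differentiable (by simp)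
  have hζd : Differentiable ℝ ζ := hζ.differentiable (by simp)
  set α : EE n → (EE n →L[ℝ] ℝ) := fun y => pcForm H y + β y with hα
  have hpcd : ∀ x, DifferentiableAt ℝ (pcForm H) x := fun x =>
    (WN.hasFDerivAt_pcForm H (hHd x)).differentiableAt
  have hαd : ∀ x, DifferentiableAt ℝ α x := fun x => (hpcd x).add (hβd x)
  have hJfun : J = fun y => α y (ζ y) - f y := funext hJ
  have hJd : ∀ x, DifferentiableAt ℝ J x := by
    intro x
    rw [hJfun]
    exact ((hαd x).clm_apply (hζd x)).sub (hfd x)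
  -- the fundamental formula : dJ(v) = dα(v, ζ)
  have hdJ : ∀ x v, fderiv ℝ J x v = extDeriv₁ α x v (ζ x) := by
    intro x v
    have h1 : fderiv ℝ J x = fderiv ℝ (fun y => α y (ζ y)) x - fderiv ℝ f x := by
      rw [hJfun]
      exact fderiv_sub ((hαd x).clm_apply (hζd x)) (hfd x)
    have h2 : fderiv ℝ (fun y => α y (ζ y)) x
        = (α x).comp (fderiv ℝ ζ x) + (fderiv ℝ α x).flip (ζ x) :=
      fderiv_clm_apply (hαd x) (hζd x)
    have h3 := hsym x
    rw [hα] at h3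
    have h4 : fderiv ℝ f x v = fderiv ℝ α x (ζ x) v + (α x) (fderiv ℝ ζ x v) := by
      rw [← h3]
      simp [lieDeriv, hα]
    rw [h1, h2]
    simp only [ContinuousLinearMap.sub_apply, ContinuousLinearMap.add_apply,
      ContinuousLinearMap.comp_apply, ContinuousLinearMap.flip_apply]
    rw [h4, extDeriv₁]
    ring
  have hextα : ∀ x u v, extDeriv₁ α x u v = extDeriv₁ (pcForm H) x u v := by
    intro x u v
    have hadd : fderiv ℝ α x = fderiv ℝ (pcForm H) x + fderiv ℝ β x :=
      fderiv_add (hpcd x) (hβd x)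
    have hβ0 := hβclosed x u v
    rw [extDeriv₁] at hβ0 ⊢
    rw [hadd]
    simp only [ContinuousLinearMap.add_apply]
    rw [extDeriv₁]
    linarith
  have part1 : ∀ x, fderiv ℝ J x (ZH H x) = 0 := by
    intro x
    rw [hdJ x (ZH H x), hextα]
    have h5 := WN.extDeriv_pcForm_ZH H (hHd x) (ζ x)
    rw [extDeriv₁] at h5 ⊢
    linarith
  refine ⟨part1, ?_⟩
  intro a b q p hsol t₁ ht₁ t₂ ht₂
  have hg : ∀ t ∈ Set.Ioo a b, HasDerivAt (fun s => J (s, q s, p s)) 0 t := by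
    intro t ht
    have hq : HasDerivAt q
        (fun i => fderiv ℝ H (t, q t, p t) (0, 0, Pi.single i 1)) t :=
      hasDerivAt_pi.2 (hsol t ht).1
    have hp : HasDerivAt p
        (fun i => - fderiv ℝ H (t, q t, p t) (0, Pi.single i 1, 0)) t :=
      hasDerivAt_pi.2 (hsol t ht).2
    have hγ : HasDerivAt (fun s : ℝ => ((s, q s, p s) : EE n))
        (ZH H (t, q t, p t)) t := (hasDerivAt_id t).prodMk (hq.prodMk hp)
    have hc := ((hJd (t, q t, p t)).hasFDerivAt).comp_hasDerivAt t hγ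
    simp only [part1 (t, q t, p t)] at hc
    exact hc
  have hmv := (convex_Ioo a b).norm_image_sub_le_of_norm_hasDerivWithin_le
    (f' := fun _ => (0:ℝ)) (C := 0) (fun y hy => (hg y hy).hasDerivWithinAt)
    (fun y hy => by simp) ht₂ ht₁
  rw [zero_mul] at hmv
  have h2 := sub_eq_zero.1 (norm_le_zero_iff.1 hmv)
  simpa using h2
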